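/- Let P₂, Q₂ > 0 with Q₂ > (1+P₂)/P₂, let P₁, Q₁' ≥ 0 and d be real, and set β := P₂/(P₂+1). Then for all sufficiently large a, (P₁ + a²·P₂ + d²·Q₂ + Q₁' + 1) / ((d + a·β)²·Q₂·P₂ + (P₂ + β²·Q₂)·(P₁ + Q₁' + 1)) < (P₂+1)/P₂; i.e., the very strong regime full-cancellation condition of Theorem 3.2.2 fails for all sufficiently large interference gain a. -/

import Mathlib

open Filter

/-- if `Q₂ > (1+P₂)/P₂`, then for all sufficiently large `a` the
very strong regime full-cancellation condition of Theorem 3.2.2 fails, i.e. the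
left-hand side drops below `(P₂+1)/P₂`. -/
theorem stmt_12 (P₂ Q₂ P₁ Q₁' d : ℝ) (hP₂ : 0 < P₂) (hQ₂ : 0 < Q₂)
    (hQ₂big : Q₂ > (1 + P₂)/P₂) (hP₁ : 0 ≤ P₁) (hQ₁' : 0 ≤ Q₁') :
    ∀ᶠ a : ℝ in atTop,
      (P₁ + a^2*P₂ + d^2*Q₂ + Q₁' + 1) /
          ((d + a*(P₂/(P₂+1)))^2*Q₂*P₂ +
            (P₂ + (P₂/(P₂+1))^2*Q₂)*(P₁ + Q₁' + 1)) < (P₂+1)/P₂ := by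
  have hP₂1 : (0:ℝ) < P₂ + 1 := by linarith
  have hne : (P₂ + 1) ≠ 0 := ne_of_gt hP₂1
  set β : ℝ := P₂/(P₂+1) with hβ
  set c : ℝ := (P₂+1)*β^2*Q₂*P₂ - P₂^2 with hcdef
  set b : ℝ := 2*d*β*(P₂+1)*Q₂*P₂ with hbdef
  set e : ℝ := (P₂+1)*d^2*Q₂*P₂ + (P₂+1)*(P₂+β^2*Q₂)*(P₁+Q₁'+1)
      - P₂*(P₁+d^2*Q₂+Q₁'+1) with hedef
  have hQ : Q₂ * P₂ > 1 + P₂ := by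
    have := (div_lt_iff₀ hP₂).mp hQ₂big
    linarith
  have hc : 0 < c := by
    have key : (P₂+1) * c = P₂^2*(Q₂*P₂ - P₂ - 1) := by
      rw [hcdef, hβ]; field_simp; ring
    nlinarith [sq_nonneg P₂, mul_pos hP₂ hP₂]
  have hg : Tendsto (fun a : ℝ => a*(c*a+b)+e) atTop atTop := by
    apply tendsto_atTop_add_const_right
    apply Tendsto.atTop_mul_atTop₀ tendsto_id
    apply tendsto_atTop_add_const_right
    exact Tendsto.const_mul_atTop hc tendsto_id
  filter_upwards [hg.eventually_gt_atTop 0] with a ha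
  have hDpos : 0 < (d + a*β)^2*Q₂*P₂ + (P₂ + β^2*Q₂)*(P₁ + Q₁' + 1) := by
    have h1 : 0 ≤ (d + a*β)^2*Q₂*P₂ := by positivity
    have h2 : 0 < (P₂ + β^2*Q₂)*(P₁ + Q₁' + 1) := by
      apply mul_pos
      · positivity
      · linarith
    linarith
  rw [div_lt_div_iff₀ hDpos hP₂]
  have hid : a*(c*a+b)+e =
      (P₂+1) * ((d + a*β)^2*Q₂*P₂ + (P₂ + β^2*Q₂)*(P₁ + Q₁' + 1))
      - (P₁ + a^2*P₂ + d^2*Q₂ + Q₁' + 1) * P₂ := by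
    rw [hcdef, hbdef, hedef]; ring
  nlinarith [ha, hid]
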